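/- Let n be a natural number and r₁,…,rₙ ∈ ℚ, and let P(t) = ∏_{i=1}^n (1 + rᵢ·t + (rᵢ²/2)·t²) ∈ ℚ[t]. Then 5! times the coefficient of t⁵ in P equals 30·(e₂·e₃ − e₁·e₄ − e₅), where e_j denotes the j-th elementary symmetric polynomial of r₁,…,rₙ (with e_j = 0 for j > n). -/

import Mathlib

open Polynomial Finset

noncomputable def esymmQ (n : ℕ) (r : Fin n → ℚ) (j : ℕ) : ℚ :=
  ∑ s ∈ Finset.univ.powersetCard j, ∏ i ∈ s, r i

lemma esymmQ_eq_multiset (n : ℕ) (r : Fin n → ℚ) (j : ℕ) :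
    esymmQ n r j = (Multiset.map r (univ : Finset (Fin n)).val).esymm j := by
  rw [esymmQ, ← Finset.esymm_map_val]

lemma esymmQ_zero (n : ℕ) (r : Fin n → ℚ) : esymmQ n r 0 = 1 := by
  simp [esymmQ]

lemma esymmQ_nil (r : Fin 0 → ℚ) (j : ℕ) : esymmQ 0 r (j+1) = 0 := by
  simp [esymmQ_eq_multiset, Multiset.esymm, Multiset.powersetCard_zero_right]

lemma esymmQ_succ (n : ℕ) (a : ℚ) (q : Fin n → ℚ) (j : ℕ) :
    esymmQ (n+1) (Fin.cons a q) (j+1) = esymmQ n q (j+1) + a * esymmQ n q j := by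
  simp only [esymmQ_eq_multiset]
  have h : Multiset.map (Fin.cons a q) (univ : Finset (Fin (n+1))).val
      = a ::ₘ Multiset.map q (univ : Finset (Fin n)).val := by
    rw [Fin.univ_succ, Finset.cons_val, Multiset.map_cons, Finset.map_val,
      Multiset.map_map]
    simp [Function.comp_def]
  rw [h, Multiset.esymm, Multiset.powersetCard_cons, Multiset.map_add, Multiset.sum_add,
      Multiset.map_map]
  congr 1
  rw [Multiset.esymm, ← Multiset.sum_map_mul_left]
  congr 1
  apply Multiset.map_congr rfl
  intro x _
  simp

lemma quad_coeff_zero (a b : ℚ) (B : ℚ[X]) :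
    ((1 + C a * X + C b * X ^ 2) * B).coeff 0 = B.coeff 0 := by
  simp [mul_coeff_zero]

lemma quad_coeff_one (a b : ℚ) (B : ℚ[X]) :
    ((1 + C a * X + C b * X ^ 2) * B).coeff 1 = B.coeff 1 + a * B.coeff 0 := by
  have h : (1 + C a * X + C b * X ^ 2) * B = B + C a * (X * B) + C b * (X * (X * B)) := by
    ring
  rw [h, coeff_add, coeff_add, coeff_C_mul, coeff_C_mul]
  rw [show (1:ℕ) = 0 + 1 from rfl, coeff_X_mul, coeff_X_mul]
  simp

lemma quad_coeff_add_two (a b : ℚ) (B : ℚ[X]) (k : ℕ) :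
    ((1 + C a * X + C b * X ^ 2) * B).coeff (k + 2) =
      B.coeff (k + 2) + a * B.coeff (k + 1) + b * B.coeff k := by
  have h : (1 + C a * X + C b * X ^ 2) * B = B + C a * (X * B) + C b * (X * (X * B)) := by
    ring
  rw [h, coeff_add, coeff_add, coeff_C_mul, coeff_C_mul]
  rw [show k + 2 = (k + 1) + 1 from rfl, coeff_X_mul, coeff_X_mul, coeff_X_mul]

lemma quad_coeff_two (a b : ℚ) (B : ℚ[X]) :
    ((1 + C a * X + C b * X ^ 2) * B).coeff 2 = B.coeff 2 + a * B.coeff 1 + b * B.coeff 0 := by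
  simpa using quad_coeff_add_two a b B 0

lemma quad_coeff_three (a b : ℚ) (B : ℚ[X]) :
    ((1 + C a * X + C b * X ^ 2) * B).coeff 3 = B.coeff 3 + a * B.coeff 2 + b * B.coeff 1 := by
  simpa using quad_coeff_add_two a b B 1

lemma quad_coeff_four (a b : ℚ) (B : ℚ[X]) :
    ((1 + C a * X + C b * X ^ 2) * B).coeff 4 = B.coeff 4 + a * B.coeff 3 + b * B.coeff 2 := by
  simpa using quad_coeff_add_two a b B 2

lemma quad_coeff_five (a b : ℚ) (B : ℚ[X]) :
    ((1 + C a * X + C b * X ^ 2) * B).coeff 5 = B.coeff 5 + a * B.coeff 4 + b * B.coeff 3 := by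
  simpa using quad_coeff_add_two a b B 3

lemma key (n : ℕ) (r : Fin n → ℚ) :
    (∏ i : Fin n, (1 + C (r i) * X + C ((r i) ^ 2 / 2) * X ^ 2)).coeff 0 = 1 ∧
    (∏ i : Fin n, (1 + C (r i) * X + C ((r i) ^ 2 / 2) * X ^ 2)).coeff 1 = esymmQ n r 1 ∧
    (∏ i : Fin n, (1 + C (r i) * X + C ((r i) ^ 2 / 2) * X ^ 2)).coeff 2 =
      esymmQ n r 1 ^ 2 / 2 ∧
    (∏ i : Fin n, (1 + C (r i) * X + C ((r i) ^ 2 / 2) * X ^ 2)).coeff 3 =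
      (esymmQ n r 1 * esymmQ n r 2 - esymmQ n r 3) / 2 ∧
    (∏ i : Fin n, (1 + C (r i) * X + C ((r i) ^ 2 / 2) * X ^ 2)).coeff 4 =
      (esymmQ n r 2 ^ 2 - 2 * esymmQ n r 4) / 4 ∧
    (∏ i : Fin n, (1 + C (r i) * X + C ((r i) ^ 2 / 2) * X ^ 2)).coeff 5 =
      (esymmQ n r 2 * esymmQ n r 3 - esymmQ n r 1 * esymmQ n r 4 - esymmQ n r 5) / 4 := by
  induction n with
  | zero =>
    simp [esymmQ_nil, coeff_one]
  | succ n ih =>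
    obtain ⟨a, q, rfl⟩ : ∃ a q, r = Fin.cons a q :=
      ⟨r 0, Fin.tail r, (Fin.cons_self_tail r).symm⟩
    have hp : (∏ i : Fin (n+1),
          (1 + C (Fin.cons a q i) * X + C ((Fin.cons a q i) ^ 2 / 2) * X ^ 2)) =
        (1 + C a * X + C (a ^ 2 / 2) * X ^ 2) *
          ∏ i : Fin n, (1 + C (q i) * X + C ((q i) ^ 2 / 2) * X ^ 2) := by
      rw [Fin.prod_univ_succ]
      simp
    obtain ⟨h0, h1, h2, h3, h4, h5⟩ := ih q
    rw [hp]
    refine ⟨?_, ?_, ?_, ?_, ?_, ?_⟩ <;>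
      simp only [quad_coeff_zero, quad_coeff_one, quad_coeff_two, quad_coeff_three,
        quad_coeff_four, quad_coeff_five, esymmQ_succ, esymmQ_zero,
        show (0+1:ℕ)=1 from rfl, show (1+1:ℕ)=2 from rfl, show (2+1:ℕ)=3 from rfl,
        show (3+1:ℕ)=4 from rfl, show (4+1:ℕ)=5 from rfl,
        h0, h1, h2, h3, h4, h5] <;> ring

theorem star_predegree (n : ℕ) (r : Fin n → ℚ)
    (P : Polynomial ℚ)
    (hP : P = ∏ i : Fin n, (1 + C (r i) * X + C ((r i) ^ 2 / 2) * X ^ 2)) :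
    (5 : ℕ).factorial * P.coeff 5 =
      30 * (esymmQ n r 2 * esymmQ n r 3 - esymmQ n r 1 * esymmQ n r 4 - esymmQ n r 5) := by
  have h := (key n r).2.2.2.2.2
  rw [hP, h]
  norm_num [Nat.factorial]
  ring
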